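/- Let X be a Banach space, φ : X → ℝ∪{+∞} a proper lower semicontinuous function, S_φ := {x ∈ X : φ(x) ≤ 0}, and x̄ ∈ S_φ. Suppose there exists r₀ > 0 such that S_φ has the Shapiro first order contact property at every point of S_φ ∩ B(x̄, r₀), and the inequality φ(x) ≤ 0 has a local error bound at x̄ with constants τ, δ > 0. Then there exists r > 0 such that e({h ∈ X : φ'_H(x; h) ≤ 1}, T^B(S_φ, x)) ≤ τ for all x ∈ S_φ ∩ B(x̄, r) with φ(x) = 0. -/

import Mathlib

open Filter Metric Set Pointwise Topology
open scoped ENNReal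

noncomputable section

/-- The Bouligand (contingent) tangent cone of `A` at `u`. -/
def bouligand {X : Type*} [NormedAddCommGroup X] [NormedSpace ℝ X] (A : Set X) (u : X) :
    Set X :=
  {v | ∃ (vs : ℕ → X) (ts : ℕ → ℝ),
    Tendsto vs atTop (𝓝 v) ∧ Tendsto ts atTop (𝓝 0) ∧ (∀ n, 0 < ts n) ∧
    ∀ n, u + ts n • vs n ∈ A}

/-- The Shapiro first order contact property of `A` at `a`. -/
def shapiro {X : Type*} [NormedAddCommGroup X] [NormedSpace ℝ X] (A : Set X) (a : X) : Prop :=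
  ∀ ε > 0, ∃ δ > 0, ∀ x ∈ A ∩ ball a δ, ∀ u ∈ A ∩ ball a δ,
    infDist (x - u) (bouligand A u) ≤ ε * ‖x - u‖

/-- The lower Hadamard directional derivative of `φ` at `x` in direction `h`. -/
def hadamardDeriv {X : Type*} [NormedAddCommGroup X] [NormedSpace ℝ X]
    (φ : X → EReal) (x h : X) : EReal :=
  liminf (fun p : ℝ × X => (((1 : ℝ) / p.1 : ℝ) : EReal) * (φ (x + p.1 • p.2) - φ x))
    ((𝓝[>] (0 : ℝ)) ×ˢ 𝓝 h)

/-- The epigraph of an `EReal`-valued function, as a subset of `X × ℝ`. -/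
def epigraph {X : Type*} (φ : X → EReal) : Set (X × ℝ) := {p | φ p.1 ≤ (p.2 : EReal)}

/-- The Hausdorff-Pompeiu excess of `C` beyond `D`. -/
def excess {X : Type*} [PseudoEMetricSpace X] (C D : Set X) : ℝ≥0∞ :=
  ⨆ c ∈ C, EMetric.infEdist c D

/-- Metric regularity of `φ` around `xbar` (for `φ xbar`). -/
def metReg {X Y : Type*} [NormedAddCommGroup X] [NormedAddCommGroup Y]
    (φ : X → Y) (xbar : X) : Prop :=
  ∃ κ > (0 : ℝ), ∃ U ∈ 𝓝 xbar, ∃ V ∈ 𝓝 (φ xbar), ∀ x ∈ U, ∀ y ∈ V,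
    EMetric.infEdist x (φ ⁻¹' {y}) ≤ ENNReal.ofReal (κ * ‖φ x - y‖)

private lemma zero_mem_bouligand {X : Type*} [NormedAddCommGroup X] [NormedSpace ℝ X]
    {A : Set X} {x : X} (hx : x ∈ A) : (0 : X) ∈ bouligand A x := by
  refine ⟨fun _ => 0, fun n => 1/(n+1), tendsto_const_nhds,
    tendsto_one_div_add_atTop_nhds_zero_nat, fun n => by positivity, fun n => by simpa using hx⟩

private lemma smul_mem_bouligand {X : Type*} [NormedAddCommGroup X] [NormedSpace ℝ X]
    {A : Set X} {x p : X} (hp : p ∈ bouligand A x) {c : ℝ} (hc : 0 < c) :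
    c • p ∈ bouligand A x := by
  obtain ⟨vs, ts, hvs, hts, htpos, hmem⟩ := hp
  refine ⟨fun n => c • vs n, fun n => ts n / c, hvs.const_smul c, ?_,
    fun n => div_pos (htpos n) hc, fun n => ?_⟩
  · simpa using hts.div_const c
  · have h1 : (ts n / c) • (c • vs n) = ts n • vs n := by
      rw [smul_smul, div_mul_cancel₀ _ hc.ne']
    rw [h1]; exact hmem n

theorem excess_le_of_error_bound {X : Type*} [NormedAddCommGroup X] [NormedSpace ℝ X]
    [CompleteSpace X]
    (φ : X → EReal) (hlsc : LowerSemicontinuous φ) (hbot : ∀ x, φ x ≠ ⊥)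
    (hproper : ∃ x, φ x ≠ ⊤)
    (S : Set X) (hS : S = {x | φ x ≤ 0}) (xbar : X) (hxbar : xbar ∈ S)
    (r₀ : ℝ) (hr₀ : 0 < r₀) (hshap : ∀ z ∈ S ∩ ball xbar r₀, shapiro S z)
    (τ δ : ℝ) (hτ : 0 < τ) (hδ : 0 < δ)
    (heb : ∀ x ∈ ball xbar δ, ((infDist x S : ℝ) : EReal) ≤ (τ : EReal) * max (φ x) 0) :
    ∃ r > (0 : ℝ), ∀ x ∈ S ∩ ball xbar r, φ x = 0 →
      excess {h | hadamardDeriv φ x h ≤ 1} (bouligand S x) ≤ ENNReal.ofReal τ := by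
  clear hS hproper hlsc hxbar
  refine ⟨min r₀ δ / 2, by positivity, ?_⟩
  rintro x ⟨hxS, hxball⟩ hφx
  set T := bouligand S x with hTdef
  have hT0 : (0:X) ∈ T := zero_mem_bouligand hxS
  have hTne : T.Nonempty := ⟨0, hT0⟩
  unfold excess
  refine iSup₂_le fun h hh => ?_
  rw [ENNReal.le_ofReal_iff_toReal_le (a := EMetric.infEdist h T) (Metric.infEdist_ne_top hTne) hτ.le]
  have hrfl : (EMetric.infEdist h T).toReal = infDist h T := rfl
  rw [hrfl]
  replace hh : hadamardDeriv φ x h ≤ 1 := hh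
  obtain ⟨C₀, hC₀⟩ : ∃ C₀ : ℝ, C₀ = 3*τ + ‖h‖ + 5 := ⟨_, rfl⟩
  have hC₀pos : 0 < C₀ := by rw [hC₀]; positivity
  have key : ∀ ε : ℝ, 0 < ε → ε < 1 → infDist h T ≤ τ + ε * C₀ := by
    intro ε hε hε1
    have hx_r₀ : x ∈ ball xbar r₀ := by
      rw [mem_ball] at hxball ⊢
      have : min r₀ δ ≤ r₀ := min_le_left _ _
      linarith
    obtain ⟨δ₁, hδ₁, hshx⟩ := hshap x ⟨hxS, hx_r₀⟩ ε hε
    obtain ⟨K, hK⟩ : ∃ K : ℝ, K = 2*τ + ‖h‖ + 2 := ⟨_, rfl⟩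
    have hKpos : 0 < K := by rw [hK]; positivity
    obtain ⟨η, hη⟩ : ∃ η : ℝ, η = min ε (min (δ/(2*(‖h‖+1))) (δ₁/K)) := ⟨_, rfl⟩
    have hηpos : 0 < η := by rw [hη, hK]; positivity
    have hηε : η ≤ ε := by rw [hη]; exact min_le_left _ _
    have hηδ : η ≤ δ/(2*(‖h‖+1)) := by
      rw [hη]; exact le_trans (min_le_right _ _) (min_le_left _ _)
    have hηδ₁ : η ≤ δ₁/K := by
      rw [hη]; exact le_trans (min_le_right _ _) (min_le_right _ _)
    -- frequently small quotient
    have hfreq : ∃ᶠ p : ℝ × X in (𝓝[>] (0:ℝ)) ×ˢ 𝓝 h,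
        (((1:ℝ)/p.1 : ℝ) : EReal) * (φ (x + p.1 • p.2) - φ x) < ((1+ε : ℝ) : EReal) := by
      by_contra hcon
      rw [Filter.not_frequently] at hcon
      have hle : ((1+ε:ℝ) : EReal) ≤ hadamardDeriv φ x h := by
        rw [hadamardDeriv]
        exact Filter.le_liminf_of_le (by isBoundedDefault)
          (hcon.mono fun p hp => not_lt.1 hp)
      have h1 : ((1+ε:ℝ) : EReal) ≤ ((1:ℝ) : EReal) := by
        refine hle.trans ?_
        simpa using hh
      rw [EReal.coe_le_coe_iff] at h1
      linarith
    have hsmem : (Ioo (0:ℝ) η ×ˢ ball h η) ∈ (𝓝[>] (0:ℝ)) ×ˢ 𝓝 h :=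
      Filter.prod_mem_prod (Ioo_mem_nhdsGT_of_mem ⟨le_rfl, hηpos⟩) (ball_mem_nhds h hηpos)
    obtain ⟨⟨t, h'⟩, hlt, hpmem⟩ :=
      (hfreq.and_eventually (Filter.eventually_of_mem hsmem fun p hp => hp)).exists
    obtain ⟨⟨ht0, htη⟩, hh'⟩ := hpmem
    dsimp only at hlt hh' ht0 htη
    rw [mem_ball] at hh'
    obtain ⟨y, hy⟩ : ∃ y : X, y = x + t • h' := ⟨_, rfl⟩
    rw [← hy] at hlt
    have hφx' : φ x = 0 := hφx
    have hφy : φ y ≤ (((1+ε)*t : ℝ) : EReal) := by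
      simp only [hφx', sub_zero] at hlt
      have htop : φ y ≠ ⊤ := by
        intro htop
        rw [htop, EReal.mul_top_of_pos (by exact_mod_cast (by positivity : (0:ℝ) < 1/t))] at hlt
        exact not_top_lt hlt
      have hc : ((φ y).toReal : EReal) = φ y := EReal.coe_toReal htop (hbot y)
      rw [← hc, ← EReal.coe_mul, EReal.coe_lt_coe_iff] at hlt
      rw [← hc, EReal.coe_le_coe_iff]
      rw [one_div, inv_mul_eq_div, div_lt_iff₀ ht0] at hlt
      linarith
    -- error bound at y
    have hh'norm : ‖h'‖ ≤ ‖h‖ + 1 := by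
      have := norm_sub_norm_le h' h
      rw [← dist_eq_norm] at this
      linarith [hηε, hε1.le, hh']
    have hyball : y ∈ ball xbar δ := by
      rw [mem_ball]
      have h1 : dist y xbar ≤ dist y x + dist x xbar := dist_triangle _ _ _
      have h2 : dist y x = t * ‖h'‖ := by
        rw [hy, dist_eq_norm, add_sub_cancel_left, norm_smul, Real.norm_eq_abs,
          abs_of_pos ht0]
      have h3 : t * ‖h'‖ < δ/2 := by
        have hb : t * ‖h'‖ ≤ t * (‖h‖+1) := mul_le_mul_of_nonneg_left hh'norm ht0.le
        have : t < δ/(2*(‖h‖+1)) := lt_of_lt_of_le htη hηδ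
        have hpos : (0:ℝ) < ‖h‖ + 1 := by positivity
        calc t * ‖h'‖ ≤ t * (‖h‖+1) := hb
          _ < (δ/(2*(‖h‖+1))) * (‖h‖+1) := mul_lt_mul_of_pos_right this hpos
          _ = δ/2 := by field_simp
      have h4 : dist x xbar < δ/2 := by
        rw [mem_ball] at hxball
        have : min r₀ δ ≤ δ := min_le_right _ _
        linarith
      linarith
    have heby := heb y hyball
    have hmax : max (φ y) 0 ≤ (((1+ε)*t : ℝ) : EReal) := by
      refine max_le hφy ?_
      exact_mod_cast (by positivity : (0:ℝ) ≤ (1+ε)*t)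
    have hebR : infDist y S ≤ τ * ((1+ε)*t) := by
      have h2 : ((infDist y S : ℝ) : EReal) ≤ ((τ * ((1+ε)*t) : ℝ) : EReal) := by
        refine heby.trans ?_
        rw [EReal.coe_mul]
        exact mul_le_mul_of_nonneg_left hmax (by exact_mod_cast hτ.le)
      exact_mod_cast h2
    obtain ⟨u, huS, hdu⟩ := (infDist_lt_iff ⟨x, hxS⟩).1
      (lt_of_le_of_lt hebR (by rw [← mul_assoc]; exact lt_add_of_pos_right _ (by positivity) : τ * ((1+ε)*t) < τ*(1+ε)*t + ε*t))
    -- bound ‖u - x‖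
    have hdyx : dist y x = t * ‖h'‖ := by
      rw [hy, dist_eq_norm, add_sub_cancel_left, norm_smul, Real.norm_eq_abs, abs_of_pos ht0]
    have hux : dist u x < t * K := by
      calc dist u x ≤ dist u y + dist y x := dist_triangle _ _ _
        _ = dist y u + t * ‖h'‖ := by rw [dist_comm u y, hdyx]
        _ < (τ*(1+ε)*t + ε*t) + t * (‖h‖+1) := by
            have : t * ‖h'‖ ≤ t * (‖h‖+1) := mul_le_mul_of_nonneg_left hh'norm ht0.le
            linarith
        _ ≤ t * K := by
            have hcoef : τ*(1+ε) + ε + (‖h‖+1) ≤ K := by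
              rw [hK]
              have : τ * ε ≤ τ * 1 := mul_le_mul_of_nonneg_left hε1.le hτ.le
              linarith
            calc (τ*(1+ε)*t + ε*t) + t * (‖h‖+1) = t * (τ*(1+ε) + ε + (‖h‖+1)) := by ring
              _ ≤ t * K := mul_le_mul_of_nonneg_left hcoef ht0.le
    have huδ₁ : u ∈ ball x δ₁ := by
      rw [mem_ball]
      have : t * K < δ₁ := by
        have : t < δ₁/K := lt_of_lt_of_le htη hηδ₁
        calc t * K < (δ₁/K) * K := by
              exact mul_lt_mul_of_pos_right this hKpos
          _ = δ₁ := by field_simp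
      linarith
    have hshap_ux : infDist (u - x) T ≤ ε * ‖u - x‖ :=
      hshx u ⟨huS, huδ₁⟩ x ⟨hxS, by simpa [mem_ball] using hδ₁⟩
    obtain ⟨p, hpT, hdp⟩ := (infDist_lt_iff hTne).1
      (show infDist (u - x) T < ε * ‖u - x‖ + ε * t from
        lt_of_le_of_lt hshap_ux (lt_add_of_pos_right _ (mul_pos hε ht0)))
    have hvT : t⁻¹ • p ∈ T := smul_mem_bouligand hpT (inv_pos.2 ht0)
    have hfinal : infDist h T ≤ dist h (t⁻¹ • p) := infDist_le_dist_of_mem hvT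
    have hd1 : dist h h' < ε := lt_of_lt_of_le (by rw [dist_comm]; exact hh') hηε
    have hd2 : dist h' (t⁻¹ • (u - x)) < τ*(1+ε) + ε := by
      have he : h' - t⁻¹ • (u - x) = t⁻¹ • (y - u) := by
        rw [hy, smul_sub, smul_sub, smul_add, smul_smul, inv_mul_cancel₀ ht0.ne', one_smul]
        abel
      rw [dist_eq_norm, he, norm_smul, Real.norm_eq_abs, abs_of_pos (inv_pos.2 ht0),
        ← dist_eq_norm]
      calc t⁻¹ * dist y u < t⁻¹ * (τ*(1+ε)*t + ε*t) := by
            exact mul_lt_mul_of_pos_left hdu (inv_pos.2 ht0)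
        _ = τ*(1+ε) + ε := by field_simp
    have hd3 : dist (t⁻¹ • (u - x)) (t⁻¹ • p) < ε * K + ε := by
      rw [dist_eq_norm, ← smul_sub, norm_smul, Real.norm_eq_abs,
        abs_of_pos (inv_pos.2 ht0), ← dist_eq_norm]
      have hxu : ‖u - x‖ < t * K := by rw [← dist_eq_norm]; exact hux
      have h5 : dist (u - x) p < ε * (t*K) + ε * t := by
        refine lt_of_lt_of_le hdp ?_
        have : ε * ‖u - x‖ ≤ ε * (t*K) := mul_le_mul_of_nonneg_left hxu.le hε.le
        linarith
      calc t⁻¹ * dist (u - x) p < t⁻¹ * (ε * (t*K) + ε * t) :=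
            mul_lt_mul_of_pos_left h5 (inv_pos.2 ht0)
        _ = ε * K + ε := by field_simp
    have htri : dist h (t⁻¹ • p) ≤ dist h h' + dist h' (t⁻¹ • (u - x)) +
        dist (t⁻¹ • (u - x)) (t⁻¹ • p) := dist_triangle4 _ _ _ _
    have : infDist h T < τ + ε * C₀ := by
      have hexp : ε + (τ*(1+ε) + ε) + (ε * K + ε) ≤ τ + ε * C₀ := by
        rw [hK, hC₀]; ring_nf; rfl
      calc infDist h T ≤ dist h (t⁻¹ • p) := hfinal
        _ ≤ dist h h' + dist h' (t⁻¹ • (u - x)) + dist (t⁻¹ • (u - x)) (t⁻¹ • p) := htri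
        _ < ε + (τ*(1+ε) + ε) + (ε * K + ε) := by linarith
        _ ≤ τ + ε * C₀ := hexp
    linarith
  refine le_of_forall_pos_le_add fun ε' hε' => ?_
  have hεpos : 0 < min (1/2 : ℝ) (ε'/C₀) := lt_min (by norm_num) (by positivity)
  have := key (min (1/2) (ε'/C₀)) hεpos (lt_of_le_of_lt (min_le_left _ _) (by norm_num))
  have h6 : min (1/2 : ℝ) (ε'/C₀) * C₀ ≤ ε' := by
    have h7 : min (1/2 : ℝ) (ε'/C₀) ≤ ε'/C₀ := min_le_right _ _
    calc min (1/2 : ℝ) (ε'/C₀) * C₀ ≤ (ε'/C₀) * C₀ :=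
          mul_le_mul_of_nonneg_right h7 hC₀pos.le
      _ = ε' := by field_simp
  linarith
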